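/- Let I ⊆ ℝ be a nonempty open interval, F, f1, f2, g1, g2 : I → ℝ and G defined on g1(I) + g2(I), satisfying F((x+y)/2) + f1(x) + f2(y) = G(g1(x) + g2(y)) for all x, y ∈ I. If all six functions are differentiable and F is not affine on any nonempty open subinterval of I, then g1'(x) ≠ 0 and g2'(x) ≠ 0 for every x ∈ I. -/

import Mathlib

open Pointwise

/-- If `F` has constant derivative `k` on `Ioo c d`, then `F` is affine there. -/
lemma aux_affine_of_const_deriv (F : ℝ → ℝ) (c d k : ℝ) (hcd : c < d)
    (h : ∀ x ∈ Set.Ioo c d, HasDerivAt F k x) :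
    ∃ A B : ℝ, ∀ x ∈ Set.Ioo c d, F x = A * x + B := by
  obtain ⟨p, hp⟩ := Set.nonempty_Ioo.2 hcd
  refine ⟨k, F p - k * p, ?_⟩
  intro z hz
  have hd : ∀ w ∈ Set.Ioo c d,
      HasDerivWithinAt (fun t => F t - k * t) ((fun _ : ℝ => (0 : ℝ)) w) (Set.Ioo c d) w := by
    intro w hw
    have := (h w hw).sub ((hasDerivAt_id w).const_mul k)
    simpa [mul_one, Pi.sub_def] using this.hasDerivWithinAt
  have hbd : ∀ w ∈ Set.Ioo c d, ‖(fun _ : ℝ => (0 : ℝ)) w‖ ≤ 0 := by simp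
  have := (convex_Ioo c d).norm_image_sub_le_of_norm_hasDerivWithin_le hd hbd hp hz
  simp only [zero_mul, norm_le_zero_iff, sub_eq_zero] at this
  linarith [this]

/-- Key step: if one of the inner derivatives vanishes at a point, `F` is affine near
the corresponding midpoints, contradiction. -/
lemma aux_key (a b : ℝ) (hab : a < b) (F F' : ℝ → ℝ)
    (hF : ∀ x ∈ Set.Ioo a b, HasDerivAt F (F' x) x)
    (hnaff : ∀ c d : ℝ, c < d → Set.Ioo c d ⊆ Set.Ioo a b →
      ¬ ∃ A B : ℝ, ∀ x ∈ Set.Ioo c d, F x = A * x + B)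
    (x0 : ℝ) (hx0 : x0 ∈ Set.Ioo a b) (k : ℝ)
    (hconst : ∀ y ∈ Set.Ioo a b, F' ((x0 + y) / 2) = k) : False := by
  obtain ⟨hx0a, hx0b⟩ := hx0
  set c := (x0 + a) / 2 with hc
  set d := (x0 + b) / 2 with hd
  have hcd : c < d := by simp only [hc, hd]; linarith
  have hsub : Set.Ioo c d ⊆ Set.Ioo a b := by
    intro z hz
    obtain ⟨h1, h2⟩ := hz
    constructor <;> [skip; skip] <;> simp only [hc, hd] at h1 h2 <;> linarith
  refine hnaff c d hcd hsub ?_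
  apply aux_affine_of_const_deriv F c d k hcd
  intro z hz
  have hy : (2 * z - x0) ∈ Set.Ioo a b := by
    obtain ⟨h1, h2⟩ := hz
    simp only [hc, hd] at h1 h2
    constructor <;> linarith
  have hzz : (x0 + (2 * z - x0)) / 2 = z := by ring
  have := hconst (2 * z - x0) hy
  rw [hzz] at this
  rw [← this]
  exact hF z (hsub hz)

theorem stmt2 (a b : ℝ) (hab : a < b)
    (F f1 f2 g1 g2 G F' f1' f2' g1' g2' G' : ℝ → ℝ)
    (hF : ∀ x ∈ Set.Ioo a b, HasDerivAt F (F' x) x)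
    (hf1 : ∀ x ∈ Set.Ioo a b, HasDerivAt f1 (f1' x) x)
    (hf2 : ∀ x ∈ Set.Ioo a b, HasDerivAt f2 (f2' x) x)
    (hg1 : ∀ x ∈ Set.Ioo a b, HasDerivAt g1 (g1' x) x)
    (hg2 : ∀ x ∈ Set.Ioo a b, HasDerivAt g2 (g2' x) x)
    (hG : ∀ u ∈ g1 '' Set.Ioo a b + g2 '' Set.Ioo a b, HasDerivAt G (G' u) u)
    (heq : ∀ x ∈ Set.Ioo a b, ∀ y ∈ Set.Ioo a b,
      F ((x + y) / 2) + f1 x + f2 y = G (g1 x + g2 y))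
    (hnaff : ∀ c d : ℝ, c < d → Set.Ioo c d ⊆ Set.Ioo a b →
      ¬ ∃ A B : ℝ, ∀ x ∈ Set.Ioo c d, F x = A * x + B) :
    ∀ x ∈ Set.Ioo a b, g1' x ≠ 0 ∧ g2' x ≠ 0 := by
  intro x0 hx0
  have hopen : Set.Ioo a b ∈ nhds x0 := (isOpen_Ioo).mem_nhds hx0
  constructor
  · intro hzero
    refine aux_key a b hab F F' hF hnaff x0 hx0 (-2 * f1' x0) ?_
    intro y hy
    have hmid : (x0 + y) / 2 ∈ Set.Ioo a b := by
      obtain ⟨h1, h2⟩ := hx0; obtain ⟨h3, h4⟩ := hy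
      constructor <;> linarith
    -- derivative of LHS in x at x0
    have hL : HasDerivAt (fun x => F ((x + y) / 2) + f1 x + f2 y)
        (F' ((x0 + y) / 2) * (1 / 2) + f1' x0) x0 := by
      have hin : HasDerivAt (fun x : ℝ => (x + y) / 2) (1 / 2) x0 := by
        simpa using ((hasDerivAt_id x0).add_const y).div_const 2
      have := (hF _ hmid).comp x0 hin
      simpa [mul_comm] using (this.add (hf1 x0 hx0)).add_const (f2 y)
    -- derivative of RHS in x at x0
    have hmem : g1 x0 + g2 y ∈ g1 '' Set.Ioo a b + g2 '' Set.Ioo a b :=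
      Set.add_mem_add ⟨x0, hx0, rfl⟩ ⟨y, hy, rfl⟩
    have hR : HasDerivAt (fun x => G (g1 x + g2 y))
        (G' (g1 x0 + g2 y) * g1' x0) x0 := by
      have hin : HasDerivAt (fun x => g1 x + g2 y) (g1' x0) x0 :=
        (hg1 x0 hx0).add_const (g2 y)
      simpa [mul_comm, Function.comp_def] using (hG _ hmem).comp x0 hin
    have hLR : HasDerivAt (fun x => F ((x + y) / 2) + f1 x + f2 y)
        (G' (g1 x0 + g2 y) * g1' x0) x0 := by
      refine hR.congr_of_eventuallyEq ?_
      filter_upwards [hopen] with x hx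
      exact (heq x hx y hy)
    have := hL.unique hLR
    rw [hzero, mul_zero] at this
    linarith
  · intro hzero
    refine aux_key a b hab F F' hF hnaff x0 hx0 (-2 * f2' x0) ?_
    intro y hy
    have hmid : (y + x0) / 2 ∈ Set.Ioo a b := by
      obtain ⟨h1, h2⟩ := hx0; obtain ⟨h3, h4⟩ := hy
      constructor <;> linarith
    have hL : HasDerivAt (fun t => F ((y + t) / 2) + f1 y + f2 t)
        (F' ((y + x0) / 2) * (1 / 2) + f2' x0) x0 := by
      have hin : HasDerivAt (fun t : ℝ => (y + t) / 2) (1 / 2) x0 := by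
        simpa using ((hasDerivAt_id x0).const_add y).div_const 2
      have := (hF _ hmid).comp x0 hin
      simpa [mul_comm, add_assoc, add_comm, add_left_comm, Pi.add_def] using
        ((this.add_const (f1 y)).add (hf2 x0 hx0))
    have hmem : g1 y + g2 x0 ∈ g1 '' Set.Ioo a b + g2 '' Set.Ioo a b :=
      Set.add_mem_add ⟨y, hy, rfl⟩ ⟨x0, hx0, rfl⟩
    have hR : HasDerivAt (fun t => G (g1 y + g2 t))
        (G' (g1 y + g2 x0) * g2' x0) x0 := by
      have hin : HasDerivAt (fun t => g1 y + g2 t) (g2' x0) x0 :=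
        (hg2 x0 hx0).const_add (g1 y)
      simpa [mul_comm, Function.comp_def] using (hG _ hmem).comp x0 hin
    have hLR : HasDerivAt (fun t => F ((y + t) / 2) + f1 y + f2 t)
        (G' (g1 y + g2 x0) * g2' x0) x0 := by
      refine hR.congr_of_eventuallyEq ?_
      filter_upwards [hopen] with t ht
      exact (heq y hy t ht)
    have := hL.unique hLR
    rw [hzero, mul_zero] at this
    have hc : (x0 + y) / 2 = (y + x0) / 2 := by ring
    rw [hc]
    linarith
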